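/- Let x_1, …, x_n ∈ ℝ^d, let p ∈ ℝ^n with p_k ≥ 0 and ∑_k p_k = 1, let x̄ = ∑_k p_k x_k, let t = softmax(x̄), and fix a label index m ∈ Fin d. Suppose i, j are indices such that softmax(x̄) = softmax(x_j) (exact version of the paper's assumption that the KL divergence between them is approximately zero) and the cross-entropy ordering −ln(softmax(x_i)_m) ≤ −ln(softmax(x_j)_m) holds. Then ⟨t − e_m, x_i⟩ ≤ ⟨t − e_m, x_j⟩, where e_m is the m-th standard basis vector; i.e., the loss gradient with respect to the mixing weight of operation i is at most that of operation j. (Exact form of Theorem 4.1 of the paper.) -/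

import Mathlib

/-- Softmax of a vector `v : ℝ^d`: `softmax(v)_l = exp(v_l) / ∑_{l'} exp(v_{l'})`. -/
noncomputable def softmax {d : ℕ} (v : Fin d → ℝ) : Fin d → ℝ :=
  fun l => Real.exp (v l) / ∑ l', Real.exp (v l')

lemma expSum_pos {d : ℕ} [Nonempty (Fin d)] (v : Fin d → ℝ) :
    0 < ∑ l', Real.exp (v l') :=
  Finset.sum_pos (fun l _ => Real.exp_pos _) Finset.univ_nonempty

/-- Gradient inequality (convexity of log-sum-exp). -/
lemma lse_grad {d : ℕ} [Nonempty (Fin d)] (u v : Fin d → ℝ) :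
    ∑ l, softmax v l * (u l - v l) ≤
      Real.log (∑ l, Real.exp (u l)) - Real.log (∑ l, Real.exp (v l)) := by
  set Su := ∑ l, Real.exp (u l) with hSu
  set Sv := ∑ l, Real.exp (v l) with hSv
  have hu : 0 < Su := expSum_pos u
  have hv : 0 < Sv := expSum_pos v
  set c := Real.log Su - Real.log Sv with hc
  have hec : Real.exp (-c) = Sv / Su := by
    rw [hc, neg_sub, Real.exp_sub, Real.exp_log hv, Real.exp_log hu]
  have hsum1 : ∑ l, softmax v l = 1 := by
    simp only [softmax, ← Finset.sum_div]
    exact div_self hv.ne'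
  have key : ∑ l, softmax v l * (u l - v l - c) ≤ 0 := by
    have h1 : ∀ l ∈ Finset.univ, softmax v l * (u l - v l - c) ≤
        softmax v l * (Real.exp (u l - v l - c) - 1) := by
      intro l _
      apply mul_le_mul_of_nonneg_left _ (div_nonneg (Real.exp_pos _).le hv.le)
      linarith [Real.add_one_le_exp (u l - v l - c)]
    have h2 : ∑ l, softmax v l * (Real.exp (u l - v l - c) - 1) = 0 := by
      have h3 : ∀ l, softmax v l * (Real.exp (u l - v l - c) - 1)
          = Real.exp (u l) * (Real.exp (-c) / Sv) - softmax v l := by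
        intro l
        simp only [softmax]
        rw [mul_sub, mul_one]
        congr 1
        rw [show u l - v l - c = u l + (-c) + (-(v l)) by ring, Real.exp_add,
          Real.exp_add, Real.exp_neg (v l)]
        field_simp
        ring
      rw [Finset.sum_congr rfl (fun l _ => h3 l), Finset.sum_sub_distrib, hsum1,
        ← Finset.sum_mul, ← hSu, hec]
      field_simp
      ring
    calc ∑ l, softmax v l * (u l - v l - c)
        ≤ ∑ l, softmax v l * (Real.exp (u l - v l - c) - 1) := Finset.sum_le_sum h1
      _ = 0 := h2
  have expand : ∑ l, softmax v l * (u l - v l - c)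
      = (∑ l, softmax v l * (u l - v l)) - c := by
    simp only [mul_sub, Finset.sum_sub_distrib, ← Finset.sum_mul, hsum1, one_mul]
  linarith [key, expand.symm.le]

lemma ce_eq {d : ℕ} [Nonempty (Fin d)] (v : Fin d → ℝ) (m : Fin d) :
    -Real.log (softmax v m) = Real.log (∑ l, Real.exp (v l)) - v m := by
  have hv : 0 < ∑ l, Real.exp (v l) := expSum_pos v
  rw [softmax, Real.log_div (Real.exp_pos _).ne' hv.ne', Real.log_exp]
  ring

/-- Theorem 4.1 (exact form): if `softmax(x̄) = softmax(x_j)` and operation `i`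
has smaller cross-entropy loss than operation `j`, then the loss gradient with
respect to `p_i` (namely `⟨softmax(x̄) − e_m, x_i⟩`) is at most that for `p_j`. -/
theorem gradient_ordering_of_crossEntropy_ordering
    {n d : ℕ} (x : Fin n → Fin d → ℝ) (p : Fin n → ℝ)
    (hp0 : ∀ k, 0 ≤ p k) (hp1 : ∑ k, p k = 1) (m : Fin d) (i j : Fin n)
    (hkl : softmax (∑ k, p k • x k) = softmax (x j))
    (hce : -Real.log (softmax (x i) m) ≤ -Real.log (softmax (x j) m)) :
    ∑ l, (softmax (∑ k, p k • x k) l - (if l = m then 1 else 0)) * x i l ≤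
      ∑ l, (softmax (∑ k, p k • x k) l - (if l = m then 1 else 0)) * x j l := by
  haveI : Nonempty (Fin d) := ⟨m⟩
  rw [hkl]
  have hgrad := lse_grad (x i) (x j)
  rw [ce_eq (x i) m, ce_eq (x j) m] at hce
  have expand : ∀ w : Fin d → ℝ,
      ∑ l, (softmax (x j) l - (if l = m then 1 else 0)) * w l
        = (∑ l, softmax (x j) l * w l) - w m := by
    intro w
    simp only [sub_mul, Finset.sum_sub_distrib, ite_mul, one_mul, zero_mul]
    rw [Finset.sum_ite_eq' Finset.univ m w]
    simp
  rw [expand (x i), expand (x j)]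
  have hsplit : ∑ l, softmax (x j) l * (x i l - x j l)
      = (∑ l, softmax (x j) l * x i l) - ∑ l, softmax (x j) l * x j l := by
    simp [mul_sub, Finset.sum_sub_distrib]
  linarith [hgrad, hsplit.symm.le]
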